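/- Any L-stationary point of the sparsity-constrained problem is a basic feasible vector: if x* ∈ C_s satisfies x* ∈ P_{C_s}(x* − (1/L)∇f(x*)) for some L > 0, then ∇ᵢf(x*) = 0 for all i in the support of x*, and ∇f(x*) = 0 when ‖x*‖₀ < s. -/

import Mathlib

noncomputable section
open scoped RealInnerProductSpace

/-- the number of nonzero components of `x` -/
def norm0 {n : ℕ} (x : EuclideanSpace ℝ (Fin n)) : ℕ :=
  (Finset.univ.filter fun i => x i ≠ 0).card

/-- the sparsity constraint set `C_s` -/
def Cs (n s : ℕ) : Set (EuclideanSpace ℝ (Fin n)) := {x | norm0 x ≤ s}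

/-- the set-valued Euclidean projection onto `Cs n s` -/
def projCs (n s : ℕ) (w : EuclideanSpace ℝ (Fin n)) : Set (EuclideanSpace ℝ (Fin n)) :=
  {y | y ∈ Cs n s ∧ ∀ z ∈ Cs n s, ‖y - w‖ ≤ ‖z - w‖}

/-- the s-th largest absolute value of a component of `x` -/
def Msval {n : ℕ} (s : ℕ) (x : EuclideanSpace ℝ (Fin n)) : ℝ :=
  (((List.ofFn fun i => |x i|).mergeSort (· ≥ ·)).getD (s - 1) 0)

lemma key_step {n s : ℕ} (g : EuclideanSpace ℝ (Fin n))
    (L : ℝ) (hL : 0 < L) (xs : EuclideanSpace ℝ (Fin n))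
    (hstat : xs ∈ projCs n s (xs - (1 / L) • g))
    (i : Fin n) (hi : xs i ≠ 0 ∨ norm0 xs < s) : g i = 0 := by
  set w : EuclideanSpace ℝ (Fin n) := xs - (1 / L) • g with hw
  set y : EuclideanSpace ℝ (Fin n) := WithLp.toLp 2 (Function.update xs i (w i)) with hy
  have hyj : ∀ j, j ≠ i → y j = xs j := fun j hj => Function.update_of_ne hj _ _
  have hyi : y i = w i := Function.update_self _ _ _
  -- y is feasible
  have hsub : (Finset.univ.filter fun j => y j ≠ 0) ⊆
      insert i (Finset.univ.filter fun j => xs j ≠ 0) := by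
    intro j hj
    simp only [Finset.mem_filter, Finset.mem_univ, true_and] at hj
    by_cases hji : j = i
    · subst hji; exact Finset.mem_insert_self _ _
    · refine Finset.mem_insert_of_mem ?_
      simp only [Finset.mem_filter, Finset.mem_univ, true_and]
      rw [← hyj j hji]; exact hj
  have hyC : y ∈ Cs n s := by
    rcases hi with hi | hi
    · have : insert i (Finset.univ.filter fun j => xs j ≠ 0) =
          (Finset.univ.filter fun j => xs j ≠ 0) := by
        apply Finset.insert_eq_self.mpr; simp [hi]
      have hc := Finset.card_le_card hsub
      rw [this] at hc
      exact le_trans hc hstat.1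
    · have hc := Finset.card_le_card hsub
      have h2 := Finset.card_insert_le i (Finset.univ.filter fun j => xs j ≠ 0)
      have hn : (Finset.univ.filter fun j => xs j ≠ 0).card = norm0 xs := rfl
      show norm0 y ≤ s
      unfold norm0
      omega
  -- compare norms
  have hle : ‖xs - w‖ ≤ ‖y - w‖ := hstat.2 y hyC
  have hsq : ‖xs - w‖ ^ 2 ≤ ‖y - w‖ ^ 2 := by
    have := mul_self_le_mul_self (norm_nonneg _) hle
    nlinarith
  rw [EuclideanSpace.norm_eq, EuclideanSpace.norm_eq, Real.sq_sqrt (by positivity),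
    Real.sq_sqrt (by positivity)] at hsq
  have hterm : ∀ j, j ≠ i → ‖(xs - w) j‖ ^ 2 = ‖(y - w) j‖ ^ 2 := by
    intro j hj
    simp [PiLp.sub_apply, hyj j hj]
  have hixi : ‖(y - w) i‖ ^ 2 = 0 := by simp [PiLp.sub_apply, hyi]
  have hsum1 := Finset.sum_erase_add Finset.univ (fun j => ‖(xs - w) j‖ ^ 2) (Finset.mem_univ i)
  have hsum2 := Finset.sum_erase_add Finset.univ (fun j => ‖(y - w) j‖ ^ 2) (Finset.mem_univ i)
  have heq : ∑ j ∈ Finset.univ.erase i, ‖(xs - w) j‖ ^ 2 =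
      ∑ j ∈ Finset.univ.erase i, ‖(y - w) j‖ ^ 2 :=
    Finset.sum_congr rfl fun j hj => hterm j (Finset.ne_of_mem_erase hj)
  beta_reduce at hsum1 hsum2 hsq
  have hzero : ‖(xs - w) i‖ ^ 2 ≤ 0 := by linarith [hsum1, hsum2, hsq, heq, hixi]
  have h0 : (xs - w) i = 0 := by
    have : ‖(xs - w) i‖ = 0 := by nlinarith [norm_nonneg ((xs - w) i), sq_nonneg ‖(xs - w) i‖]
    exact norm_eq_zero.mp this
  have : (1 / L) * g i = 0 := by
    have hcalc : (xs - w) i = (1 / L) * g i := by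
      simp [hw, PiLp.sub_apply, PiLp.smul_apply, smul_eq_mul]
    rwa [hcalc] at h0
  have hL' : (1 / L) ≠ 0 := by positivity
  exact (mul_eq_zero.mp this).resolve_left hL'

/-- Any L-stationary point is a basic feasible vector. -/
theorem stmt3 {n s : ℕ} (f : EuclideanSpace ℝ (Fin n) → ℝ) (hf : ContDiff ℝ 1 f)
    (L : ℝ) (hL : 0 < L) (xs : EuclideanSpace ℝ (Fin n)) (hxs : xs ∈ Cs n s)
    (hstat : xs ∈ projCs n s (xs - (1 / L) • gradient f xs)) :
    (∀ i, xs i ≠ 0 → gradient f xs i = 0) ∧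
    (norm0 xs < s → gradient f xs = 0) := by
  constructor
  · intro i hi
    exact key_step (gradient f xs) L hL xs hstat i (Or.inl hi)
  · intro hlt
    ext i
    exact key_step (gradient f xs) L hL xs hstat i (Or.inr hlt)
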